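/- Define permutations π, ρ ∈ S_n to be adjacent if |π⁻¹(i) − ρ⁻¹(i)| ≤ 1 for every i ∈ {1,…,n}. Then π and ρ are adjacent if and only if ρ = π∘s(p₁)∘⋯∘s(p_k) for some set of positions p₁,…,p_k ∈ {1,…,n−1} with |p_i − p_j| ≥ 2 for all i ≠ j, where s(p) denotes the transposition swapping p and p+1. -/

import Mathlib

namespace Stmt14

def F (n : ℕ) (q : ℕ) : Equiv.Perm (Fin n) :=
  if h : q + 1 < n then Equiv.swap ⟨q, Nat.lt_of_succ_lt h⟩ ⟨q+1, h⟩ else 1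

lemma F_eq {n q : ℕ} (h : q + 1 < n) :
    F n q = Equiv.swap (⟨q, Nat.lt_of_succ_lt h⟩ : Fin n) ⟨q + 1, h⟩ := dif_pos h

lemma swap_val {n a : ℕ} (h : a + 1 < n) (v : Fin n) :
    ((Equiv.swap (⟨a, Nat.lt_of_succ_lt h⟩ : Fin n) ⟨a+1, h⟩ v : Fin n) : ℕ) =
      if (v : ℕ) = a then a + 1 else if (v : ℕ) = a + 1 then a else v := by
  rw [Equiv.swap_apply_def]
  split_ifs with h1 h2 h3 h4 h5 <;>
    simp_all [Fin.ext_iff]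

lemma eval (n : ℕ) (L : List ℕ) (hn : ∀ q ∈ L, q + 1 < n)
    (hsep : L.Pairwise (fun a b => a + 2 ≤ b ∨ b + 2 ≤ a)) (j : Fin n) :
    (((L.map (F n)).prod j : Fin n) : ℕ) =
      if (j : ℕ) ∈ L then (j : ℕ) + 1
      else if ∃ q ∈ L, q + 1 = (j : ℕ) then (j : ℕ) - 1 else (j : ℕ) := by
  induction L with
  | nil => simp
  | cons a L ih =>
    rw [List.pairwise_cons] at hsep
    obtain ⟨ha, hL⟩ := hsep
    have hna : a + 1 < n := hn a (by simp)
    have hn' : ∀ q ∈ L, q + 1 < n := fun q hq => hn q (List.mem_cons_of_mem _ hq)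
    have ih := ih hn' hL
    have hprod : ((List.map (F n) (a :: L)).prod j : Fin n) =
        F n a ((List.map (F n) L).prod j) := by
      simp [Equiv.Perm.mul_apply]
    rw [hprod]
    rw [show F n a = Equiv.swap (⟨a, Nat.lt_of_succ_lt hna⟩ : Fin n) ⟨a+1, hna⟩ from dif_pos hna]
    rw [swap_val hna]
    set v := ((List.map (F n) L).prod j) with hv
    by_cases hA : (j : ℕ) ∈ L
    · have hvv : (v : ℕ) = (j : ℕ) + 1 := by rw [ih]; simp [hA]
      have hsepj : a + 2 ≤ (j : ℕ) ∨ (j : ℕ) + 2 ≤ a := ha _ hA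
      have hmem : (j : ℕ) ∈ a :: L := List.mem_cons_of_mem _ hA
      rw [hvv, if_pos hmem]
      split_ifs <;> omega
    · by_cases hB : ∃ q ∈ L, q + 1 = (j : ℕ)
      · obtain ⟨q, hqL, hq⟩ := hB
        have hvv : (v : ℕ) = (j : ℕ) - 1 := by
          rw [ih]; simp only [hA, if_false]
          rw [if_pos ⟨q, hqL, hq⟩]
        have hsepq : a + 2 ≤ q ∨ q + 2 ≤ a := ha _ hqL
        have hEx : ∃ q ∈ a :: L, q + 1 = (j : ℕ) := ⟨q, List.mem_cons_of_mem _ hqL, hq⟩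
        have hnmem : ¬ ((j : ℕ) ∈ a :: L) := by
          simp only [List.mem_cons, hA, or_false]; omega
        rw [hvv, if_neg hnmem, if_pos hEx]
        split_ifs <;> omega
      · have hvv : (v : ℕ) = (j : ℕ) := by
          rw [ih]; simp only [hA, if_false]; rw [if_neg hB]
        by_cases hja1 : (j : ℕ) = a + 1
        · have hEx : ∃ q ∈ a :: L, q + 1 = (j : ℕ) := ⟨a, List.mem_cons_self, hja1.symm⟩
          have hnmem : ¬ ((j : ℕ) ∈ a :: L) := by
            simp only [List.mem_cons, hA, or_false]; omega
          rw [hvv, if_neg hnmem, if_pos hEx]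
          split_ifs <;> omega
        · by_cases hja : (j : ℕ) = a
          · have hmem : (j : ℕ) ∈ a :: L := by
              simp only [List.mem_cons]; exact Or.inl hja
            rw [hvv, if_pos hmem]
            split_ifs <;> omega
          · have hnmem : ¬ ((j : ℕ) ∈ a :: L) := by
              simp only [List.mem_cons, hA, or_false]; exact hja
            have hnEx : ¬ ∃ q ∈ a :: L, q + 1 = (j : ℕ) := by
              rintro ⟨q, hq, hq1⟩
              rcases List.mem_cons.1 hq with rfl | hq
              · exact hja1 hq1.symm
              · exact hB ⟨q, hq, hq1⟩
            rw [hvv, if_neg hnmem, if_neg hnEx]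
            split_ifs <;> omega


def Move1 {n : ℕ} (σ : Equiv.Perm (Fin n)) : Prop :=
  ∀ j : Fin n, (σ j : ℕ) = (j : ℕ) + 1 ∨ (σ j : ℕ) = (j : ℕ) ∨ (σ j : ℕ) + 1 = (j : ℕ)

lemma inj_nat {n : ℕ} (σ : Equiv.Perm (Fin n)) {x y : Fin n}
    (h : (σ x : ℕ) = (σ y : ℕ)) : (x : ℕ) = (y : ℕ) :=
  congrArg Fin.val (σ.injective (Fin.ext h))

lemma move' {n : ℕ} (σ : Equiv.Perm (Fin n)) (hm : Move1 σ) (q : ℕ) (hq : q < n) :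
    (σ ⟨q, hq⟩ : ℕ) = q + 1 ∨ (σ ⟨q, hq⟩ : ℕ) = q ∨ (σ ⟨q, hq⟩ : ℕ) + 1 = q := by
  have := hm ⟨q, hq⟩; simpa using this

lemma up {n : ℕ} (σ : Equiv.Perm (Fin n)) (hm : Move1 σ) {p : ℕ} (hp : p + 1 < n)
    (h : (σ ⟨p, Nat.lt_of_succ_lt hp⟩ : ℕ) = p + 1) : (σ ⟨p + 1, hp⟩ : ℕ) = p := by
  by_contra hc
  have h1 : (σ ⟨p + 1, hp⟩ : ℕ) = p + 2 := by
    rcases move' σ hm (p+1) hp with h' | h' | h'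
    · omega
    · exfalso
      have := inj_nat σ (x := ⟨p+1, hp⟩) (y := ⟨p, Nat.lt_of_succ_lt hp⟩) (by omega)
      simp at this
    · exfalso; exact hc (by omega)
  have claim : ∀ d (h2 : p + d < n), (σ ⟨p + d, h2⟩ : ℕ) = p + d + 1 := by
    intro d
    induction d using Nat.strong_induction_on with
    | _ d ih =>
      match d with
      | 0 => intro h2; exact h
      | 1 => intro h2; exact h1
      | (d+2) =>
        intro h2
        have e1 : (σ ⟨p + d, by omega⟩ : ℕ) = p + d + 1 := ih d (by omega) (by omega)
        have e2 : (σ ⟨p + d + 1, by omega⟩ : ℕ) = p + d + 2 := ih (d+1) (by omega) (by omega)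
        rcases move' σ hm (p + (d+2)) h2 with h' | h' | h'
        · omega
        · exfalso
          have := inj_nat σ (x := ⟨p + (d+2), h2⟩) (y := ⟨p + d + 1, by omega⟩) (by omega)
          simp only [Fin.val_mk] at this; omega
        · exfalso
          have := inj_nat σ (x := ⟨p + (d+2), h2⟩) (y := ⟨p + d, by omega⟩) (by omega)
          simp only [Fin.val_mk] at this; omega
  have hfin := claim (n - 1 - p) (by omega)
  have := (σ ⟨p + (n - 1 - p), by omega⟩).isLt
  omega

lemma move_inv {n : ℕ} (σ : Equiv.Perm (Fin n)) (hm : Move1 σ) : Move1 σ⁻¹ := by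
  intro j
  have h := hm (σ⁻¹ j)
  rw [show σ (σ⁻¹ j) = j from by simp] at h
  omega

lemma down {n : ℕ} (σ : Equiv.Perm (Fin n)) (hm : Move1 σ) {p : ℕ} (hp : p + 1 < n)
    (h : (σ ⟨p + 1, hp⟩ : ℕ) = p) : (σ ⟨p, Nat.lt_of_succ_lt hp⟩ : ℕ) = p + 1 := by
  have h' : (σ⁻¹ ⟨p, Nat.lt_of_succ_lt hp⟩ : ℕ) = p + 1 := by
    have : σ ⟨p + 1, hp⟩ = ⟨p, Nat.lt_of_succ_lt hp⟩ := Fin.ext h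
    rw [← this, show σ⁻¹ (σ ⟨p + 1, hp⟩) = ⟨p + 1, hp⟩ from by simp]
  have h2 := up σ⁻¹ (move_inv σ hm) hp h'
  have : σ⁻¹ ⟨p + 1, hp⟩ = ⟨p, Nat.lt_of_succ_lt hp⟩ := Fin.ext h2
  rw [← this, show σ (σ⁻¹ ⟨p + 1, hp⟩) = ⟨p + 1, hp⟩ from by simp]

end Stmt14

/-- Two permutations are adjacent if every element changes its position by at most 1. -/
def Adjacent {n : ℕ} (π ρ : Equiv.Perm (Fin n)) : Prop :=
  ∀ i : Fin n, |((π⁻¹ i : ℕ) : ℤ) - ((ρ⁻¹ i : ℕ) : ℤ)| ≤ 1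

theorem stmt_14 (n : ℕ) (π ρ : Equiv.Perm (Fin n)) :
    Adjacent π ρ ↔
      ∃ (k : ℕ) (p : Fin k → ℕ) (h : ∀ i, p i + 1 < n),
        (∀ i j : Fin k, i ≠ j → p i + 2 ≤ p j ∨ p j + 2 ≤ p i) ∧
        ρ = π * (List.ofFn (fun i : Fin k =>
          Equiv.swap (⟨p i, Nat.lt_of_succ_lt (h i)⟩ : Fin n) ⟨p i + 1, h i⟩)).prod := by
  have bridge : Adjacent π ρ ↔ Stmt14.Move1 (π⁻¹ * ρ) := by
    constructor
    · intro hA j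
      have h1 := hA (ρ j)
      rw [show ρ⁻¹ (ρ j) = j from by simp] at h1
      rw [abs_le] at h1
      have h2 : (π⁻¹ * ρ) j = π⁻¹ (ρ j) := rfl
      rw [h2]
      omega
    · intro hM i
      have h1 := hM (ρ⁻¹ i)
      have h2 : (π⁻¹ * ρ) (ρ⁻¹ i) = π⁻¹ i := by
        simp [Equiv.Perm.mul_apply]
      rw [h2] at h1
      rw [abs_le]
      omega
  rw [bridge]
  constructor
  · intro hm
    set σ := π⁻¹ * ρ with hσ
    classical
    set L : List (Fin n) :=
      (List.finRange n).filter (fun j => decide ((σ j : ℕ) = (j : ℕ) + 1)) with hL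
    set LN : List ℕ := L.map Fin.val with hLN
    have hmemLN : ∀ q : ℕ, q ∈ LN ↔ ∃ hq : q < n, (σ ⟨q, hq⟩ : ℕ) = q + 1 := by
      intro q
      simp only [hLN, hL, List.mem_map, List.mem_filter, List.mem_finRange, true_and,
        decide_eq_true_eq]
      constructor
      · rintro ⟨j, hj, rfl⟩
        exact ⟨j.isLt, by simpa using hj⟩
      · rintro ⟨hq, h⟩
        exact ⟨⟨q, hq⟩, h, rfl⟩
    have hnLN : ∀ q ∈ LN, q + 1 < n := by
      intro q hq
      obtain ⟨h1, h2⟩ := (hmemLN q).1 hq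
      have := (σ ⟨q, h1⟩).isLt
      omega
    have hNodup : LN.Nodup :=
      ((List.nodup_finRange n).filter _).map Fin.val_injective
    have hsepmem : ∀ q ∈ LN, ∀ q' ∈ LN, q ≠ q' → q + 2 ≤ q' ∨ q' + 2 ≤ q := by
      intro q hq q' hq' hne
      obtain ⟨h1, e1⟩ := (hmemLN q).1 hq
      obtain ⟨h1', e1'⟩ := (hmemLN q').1 hq'
      by_contra hcon
      push_neg at hcon
      have hcase : q' = q + 1 ∨ q = q' + 1 := by omega
      rcases hcase with h | h
      · have u1 := Stmt14.up σ hm (hnLN q hq) e1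
        rw [show (⟨q + 1, hnLN q hq⟩ : Fin n) = ⟨q', h1'⟩ from Fin.ext h.symm] at u1
        omega
      · have u1 := Stmt14.up σ hm (hnLN q' hq') e1'
        rw [show (⟨q' + 1, hnLN q' hq'⟩ : Fin n) = ⟨q, h1⟩ from Fin.ext h.symm] at u1
        omega
    have hPair : LN.Pairwise (fun a b => a + 2 ≤ b ∨ b + 2 ≤ a) :=
      List.Pairwise.imp_of_mem (fun ha hb hne => hsepmem _ ha _ hb hne) hNodup
    have hget : ∀ i : Fin LN.length, LN.get i ∈ LN := fun i => List.get_mem LN i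
    have hh : ∀ i : Fin LN.length, LN.get i + 1 < n :=
      fun i => hnLN _ (hget i)
    refine ⟨LN.length, fun i => LN.get i, hh, ?_, ?_⟩
    · intro i j hij
      refine hsepmem _ (hget i) _ (hget j) ?_
      intro hval
      exact hij ((List.Nodup.get_inj_iff hNodup).1 hval)
    · have hlist : List.ofFn (fun i : Fin LN.length =>
          Equiv.swap (⟨LN.get i, Nat.lt_of_succ_lt (hh i)⟩ : Fin n) ⟨LN.get i + 1, hh i⟩) =
          LN.map (Stmt14.F n) := by
        conv_rhs => rw [← List.ofFn_get LN, List.map_ofFn]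
        refine congrArg _ (funext fun i => ?_)
        exact (Stmt14.F_eq (hh i)).symm
      rw [hlist]
      have hτ : σ = (LN.map (Stmt14.F n)).prod := by
        apply Equiv.ext
        intro j
        apply Fin.ext
        have heval := Stmt14.eval n LN hnLN hPair j
        rw [heval]
        rcases hm j with h | h | h
        · have hj : (j : ℕ) ∈ LN := (hmemLN _).2 ⟨j.isLt, by simpa using h⟩
          rw [if_pos hj]
          exact h
        · have hnot1 : (j : ℕ) ∉ LN := by
            intro hj
            obtain ⟨hq, e⟩ := (hmemLN _).1 hj
            rw [show (⟨(j : ℕ), hq⟩ : Fin n) = j from Fin.ext rfl] at e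
            omega
          have hnot2 : ¬ ∃ q ∈ LN, q + 1 = (j : ℕ) := by
            rintro ⟨q, hq, hq1⟩
            obtain ⟨hqlt, e⟩ := (hmemLN q).1 hq
            have u := Stmt14.up σ hm (hnLN q hq) e
            rw [show (⟨q + 1, hnLN q hq⟩ : Fin n) = j from Fin.ext hq1] at u
            omega
          rw [if_neg hnot1, if_neg hnot2]
          exact h
        · have hq1n : (σ j : ℕ) + 1 < n := by
            have := j.isLt; omega
          have hd : (σ ⟨(σ j : ℕ) + 1, hq1n⟩ : ℕ) = (σ j : ℕ) := by
            rw [show (⟨(σ j : ℕ) + 1, hq1n⟩ : Fin n) = j from Fin.ext h]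
          have e := Stmt14.down σ hm hq1n hd
          have hqmem : (σ j : ℕ) ∈ LN :=
            (hmemLN _).2 ⟨Nat.lt_of_succ_lt hq1n, e⟩
          have hnot1 : (j : ℕ) ∉ LN := by
            intro hj
            obtain ⟨hq, e'⟩ := (hmemLN _).1 hj
            rw [show (⟨(j : ℕ), hq⟩ : Fin n) = j from Fin.ext rfl] at e'
            omega
          have hEx : ∃ q ∈ LN, q + 1 = (j : ℕ) := ⟨(σ j : ℕ), hqmem, h⟩
          rw [if_neg hnot1, if_pos hEx]
          omega
      rw [← hτ, hσ]
      exact (mul_inv_cancel_left π ρ).symm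
  · rintro ⟨k, p, hh, hsepp, rfl⟩
    set LN : List ℕ := List.ofFn p with hLN
    have hn' : ∀ q ∈ LN, q + 1 < n := by
      intro q hq
      rw [hLN, List.mem_ofFn] at hq
      obtain ⟨i, rfl⟩ := hq
      exact hh i
    have hPair : LN.Pairwise (fun a b => a + 2 ≤ b ∨ b + 2 ≤ a) :=
      List.pairwise_ofFn.2 (fun i j hij => hsepp i j (ne_of_lt hij))
    have hlist : List.ofFn (fun i : Fin k =>
        Equiv.swap (⟨p i, Nat.lt_of_succ_lt (hh i)⟩ : Fin n) ⟨p i + 1, hh i⟩) =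
        LN.map (Stmt14.F n) := by
      rw [hLN, List.map_ofFn]
      refine congrArg _ (funext fun i => ?_)
      exact (Stmt14.F_eq (hh i)).symm
    rw [hlist, inv_mul_cancel_left]
    intro j
    have heval := Stmt14.eval n LN hn' hPair j
    rw [heval]
    split_ifs with h1 h2
    · omega
    · obtain ⟨q, hq, hq1⟩ := h2
      omega
    · omega
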